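/- arXiv:2203.09015 — 2 statements merged into one kernel-verified Lean document; each statement's English description precedes it below -/
import Mathlib

section
/- For T > 0 and 0 < k < sqrt((1 − e^{−T})/(2Te)), the toy-model rate function Ĩ_T(k) = (1/2) inf_{f ∈ H₀¹}[ k²/∫₀ᵀ e^{−t+2f(t)}dt + ∫₀ᵀ ḟ(t)²dt ] satisfies the two-sided bound k²(e−1)/(2e(1−e^{−T})) ≤ Ĩ_T(k) ≤ k²/(1−e^{−T}). -/
open MeasureTheory


lemma key_alg (T k D a E : ℝ) (hT : 0 < T) (hk : 0 < k) (hD : 0 < D)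
    (hk2 : k ^ 2 < D / (2 * T * Real.exp 1)) (ha : 0 ≤ a) (haE : a ^ 2 ≤ T * E) :
    k ^ 2 * (Real.exp 1 - 1) / (Real.exp 1 * D)
      ≤ k ^ 2 * Real.exp (-(2 * a)) / D + E := by
  have he : (1:ℝ) < Real.exp 1 := by nlinarith [Real.exp_one_gt_d9]
  have he0 : (0:ℝ) < Real.exp 1 := by linarith
  set x := Real.exp (-(2 * a)) with hxdef
  have hx : 1 - 2 * a ≤ x := by
    have := Real.add_one_le_exp (-(2 * a)); simp only [hxdef]; linarith
  set C := k ^ 2 / D with hCdef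
  have hC : 0 < C := div_pos (by positivity) hD
  have h2 : 2 * T * Real.exp 1 * C < 1 := by
    have h3 : C < 1 / (2 * T * Real.exp 1) := by
      rw [hCdef, div_lt_div_iff₀ hD (by positivity)]
      rw [lt_div_iff₀ (by positivity)] at hk2
      linarith
    rw [lt_div_iff₀ (by positivity)] at h3
    linarith
  have hq' : 0 ≤ a ^ 2 * Real.exp 1 - 2 * C * a * T * Real.exp 1 + C * T := by
    nlinarith [mul_nonneg he0.le (sq_nonneg (a - T * C)),
      mul_nonneg (mul_nonneg hT.le hC.le) (by nlinarith : (0:ℝ) ≤ 1 - Real.exp 1 * T * C)]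
  have hq : 0 ≤ a ^ 2 / T - 2 * C * a + C / Real.exp 1 := by
    have heq : a ^ 2 / T - 2 * C * a + C / Real.exp 1
        = (a ^ 2 * Real.exp 1 - 2 * C * a * T * Real.exp 1 + C * T) / (T * Real.exp 1) := by
      field_simp
    rw [heq]; exact div_nonneg hq' (by positivity)
  have haE' : a ^ 2 / T ≤ E := by rw [div_le_iff₀ hT]; linarith
  have e1 : k ^ 2 * (Real.exp 1 - 1) / (Real.exp 1 * D) = C - C / Real.exp 1 := by
    rw [hCdef]; field_simp
  have e2 : k ^ 2 * x / D = C * x := by rw [hCdef]; ring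
  rw [e1, e2]
  have h4 : C * (1 - 2 * a) ≤ C * x := mul_le_mul_of_nonneg_left hx hC.le
  have h5 : C * (1 - 2 * a) = C - 2 * C * a := by ring
  linarith

lemma primitive_bound (T : ℝ) (hT : 0 < T) (f f' : ℝ → ℝ)
    (hrep : ∀ t ∈ Set.Icc (0:ℝ) T, f t = ∫ s in (0:ℝ)..t, f' s)
    (hint : IntervalIntegrable f' volume 0 T)
    (hint2 : IntervalIntegrable (fun s => (f' s) ^ 2) volume 0 T)
    {t : ℝ} (ht : t ∈ Set.Icc (0:ℝ) T) {c : ℝ} (hc : 0 < c) :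
    f t ≤ c * T / 2 + (∫ s in (0:ℝ)..T, (f' s) ^ 2) / (2 * c) := by
  obtain ⟨ht0, htT⟩ := ht
  have hsub : Set.uIcc (0:ℝ) t ⊆ Set.uIcc (0:ℝ) T := by
    rw [Set.uIcc_of_le ht0, Set.uIcc_of_le hT.le]
    exact Set.Icc_subset_Icc le_rfl htT
  have h1 : IntervalIntegrable f' volume 0 t := hint.mono_set hsub
  have h2 : IntervalIntegrable (fun s => (f' s) ^ 2) volume 0 t := hint2.mono_set hsub
  have h2' : IntervalIntegrable (fun s => c / 2 + (f' s) ^ 2 / (2 * c)) volume 0 t :=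
    intervalIntegrable_const.add (h2.div_const _)
  have step1 : f t ≤ ∫ s in (0:ℝ)..t, (c / 2 + (f' s) ^ 2 / (2 * c)) := by
    rw [hrep t ⟨ht0, htT⟩]
    apply intervalIntegral.integral_mono_on ht0 h1 h2'
    intro s _
    have heq : c / 2 + (f' s) ^ 2 / (2 * c) - f' s = (f' s - c) ^ 2 / (2 * c) := by
      field_simp; ring
    have hpos : 0 ≤ (f' s - c) ^ 2 / (2 * c) := by positivity
    linarith
  have step2 : ∫ s in (0:ℝ)..t, (c / 2 + (f' s) ^ 2 / (2 * c))
      = c * t / 2 + (∫ s in (0:ℝ)..t, (f' s) ^ 2) / (2 * c) := by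
    rw [intervalIntegral.integral_add intervalIntegrable_const (h2.div_const _),
      intervalIntegral.integral_const, intervalIntegral.integral_div]
    simp; ring
  have step3 : (∫ s in (0:ℝ)..t, (f' s) ^ 2) ≤ ∫ s in (0:ℝ)..T, (f' s) ^ 2 := by
    have hsub2 : Set.uIcc t T ⊆ Set.uIcc (0:ℝ) T := by
      rw [Set.uIcc_of_le htT, Set.uIcc_of_le hT.le]
      exact Set.Icc_subset_Icc ht0 le_rfl
    have h3 : IntervalIntegrable (fun s => (f' s) ^ 2) volume t T := hint2.mono_set hsub2
    have h4 := intervalIntegral.integral_add_adjacent_intervals h2 h3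
    have h5 : 0 ≤ ∫ s in t..T, (f' s) ^ 2 :=
      intervalIntegral.integral_nonneg htT (fun s _ => sq_nonneg _)
    linarith
  have step4 : c * t / 2 ≤ c * T / 2 := by nlinarith
  have step5 : (∫ s in (0:ℝ)..t, (f' s) ^ 2) / (2 * c)
      ≤ (∫ s in (0:ℝ)..T, (f' s) ^ 2) / (2 * c) := by
    exact div_le_div_of_nonneg_right step3 (by positivity)
  linarith [step1, step2.le]

lemma primitive_bound_sqrt (T : ℝ) (hT : 0 < T) (f f' : ℝ → ℝ)
    (hrep : ∀ t ∈ Set.Icc (0:ℝ) T, f t = ∫ s in (0:ℝ)..t, f' s)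
    (hint : IntervalIntegrable f' volume 0 T)
    (hint2 : IntervalIntegrable (fun s => (f' s) ^ 2) volume 0 T)
    {t : ℝ} (ht : t ∈ Set.Icc (0:ℝ) T) :
    f t ≤ Real.sqrt (T * ∫ s in (0:ℝ)..T, (f' s) ^ 2) := by
  set E := ∫ s in (0:ℝ)..T, (f' s) ^ 2 with hE
  have hE0 : 0 ≤ E := intervalIntegral.integral_nonneg hT.le (fun s _ => sq_nonneg _)
  rcases eq_or_lt_of_le hE0 with h0 | hpos
  · -- E = 0
    rw [← h0, mul_zero, Real.sqrt_zero]
    refine le_of_forall_pos_le_add (fun ε hε => ?_)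
    have hc : (0:ℝ) < 2 * ε / T := by positivity
    have := primitive_bound T hT f f' hrep hint hint2 ht hc
    rw [← hE, ← h0] at this
    have heq : (2 * ε / T) * T / 2 = ε := by field_simp
    simpa [heq] using this
  · -- E > 0
    have hc : (0:ℝ) < Real.sqrt (E / T) := Real.sqrt_pos.mpr (by positivity)
    have hcsq : Real.sqrt (E / T) ^ 2 = E / T := Real.sq_sqrt (by positivity)
    have hb := primitive_bound T hT f f' hrep hint hint2 ht hc
    rw [← hE] at hb
    set c := Real.sqrt (E / T) with hcdef
    have hcT : c * T = Real.sqrt (T * E) := by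
      rw [show T * E = (c * T) ^ 2 by rw [mul_pow, hcsq]; field_simp]
      rw [Real.sqrt_sq (by positivity)]
    have hEc : E / (2 * c) = c * T / 2 := by
      have hEeq : E = c ^ 2 * T := by rw [hcsq]; field_simp
      rw [hEeq]; field_simp
    calc f t ≤ c * T / 2 + E / (2 * c) := hb
    _ = c * T := by rw [hEc]; ring
    _ = Real.sqrt (T * E) := hcT

lemma exp_neg_integral (T : ℝ) : ∫ t in (0:ℝ)..T, Real.exp (-t) = 1 - Real.exp (-T) := by
  rw [intervalIntegral.integral_comp_neg fun x => Real.exp x, integral_exp]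
  norm_num

lemma elem_lower (T k : ℝ) (hT : 0 < T) (hk : 0 < k)
    (hk2 : k ^ 2 < (1 - Real.exp (-T)) / (2 * T * Real.exp 1))
    (f f' : ℝ → ℝ)
    (hrep : ∀ t ∈ Set.Icc (0:ℝ) T, f t = ∫ s in (0:ℝ)..t, f' s)
    (hint : IntervalIntegrable f' volume 0 T)
    (hint2 : IntervalIntegrable (fun s => (f' s) ^ 2) volume 0 T) :
    k ^ 2 * (Real.exp 1 - 1) / (Real.exp 1 * (1 - Real.exp (-T)))
      ≤ k ^ 2 / (∫ t in (0:ℝ)..T, Real.exp (-t + 2 * f t)) +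
          ∫ t in (0:ℝ)..T, (f' t) ^ 2 := by
  have hD : 0 < 1 - Real.exp (-T) := by
    have : Real.exp (-T) < 1 := Real.exp_lt_one_iff.mpr (by linarith)
    linarith
  set D := 1 - Real.exp (-T) with hDdef
  set E := ∫ t in (0:ℝ)..T, (f' t) ^ 2 with hE
  have hE0 : 0 ≤ E := intervalIntegral.integral_nonneg hT.le (fun s _ => sq_nonneg _)
  set a := Real.sqrt (T * E) with ha
  have ha0 : 0 ≤ a := Real.sqrt_nonneg _
  have ha2 : a ^ 2 = T * E := Real.sq_sqrt (by positivity)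
  have hfb : ∀ t ∈ Set.Icc (0:ℝ) T, f t ≤ a :=
    fun t ht => primitive_bound_sqrt T hT f f' hrep hint hint2 ht
  -- continuity of f
  have hfc : ContinuousOn f (Set.Icc (0:ℝ) T) := by
    have hc1 := intervalIntegral.continuousOn_primitive_interval' hint
      (Set.left_mem_uIcc (a := (0:ℝ)) (b := T))
    rw [Set.uIcc_of_le hT.le] at hc1
    exact hc1.congr hrep
  have hgc : ContinuousOn (fun t => Real.exp (-t + 2 * f t)) (Set.Icc (0:ℝ) T) :=
    Real.continuous_exp.comp_continuousOn
      ((continuous_neg.continuousOn).add (continuousOn_const.mul hfc))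
  have hgint : IntervalIntegrable (fun t => Real.exp (-t + 2 * f t)) volume 0 T := by
    rw [← Set.uIcc_of_le hT.le] at hgc
    exact hgc.intervalIntegrable
  set I := ∫ t in (0:ℝ)..T, Real.exp (-t + 2 * f t) with hI
  have hIpos : 0 < I :=
    intervalIntegral.intervalIntegral_pos_of_pos_on hgint (fun x _ => Real.exp_pos _) hT
  have hIle : I ≤ Real.exp (2 * a) * D := by
    have hmono : I ≤ ∫ t in (0:ℝ)..T, Real.exp (-t + 2 * a) := by
      apply intervalIntegral.integral_mono_on hT.le hgint
        ((Continuous.intervalIntegrable (by continuity) _ _))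
      intro x hx
      exact Real.exp_le_exp.mpr (by linarith [hfb x hx])
    have hcomp : ∫ t in (0:ℝ)..T, Real.exp (-t + 2 * a) = Real.exp (2 * a) * D := by
      have hsplit : ∀ t : ℝ, Real.exp (-t + 2 * a) = Real.exp (2 * a) * Real.exp (-t) :=
        fun t => by rw [← Real.exp_add]; ring_nf
      simp_rw [hsplit]
      rw [intervalIntegral.integral_const_mul, exp_neg_integral]
    linarith [hcomp ▸ hmono]
  have hdiv : k ^ 2 / (Real.exp (2 * a) * D) ≤ k ^ 2 / I :=
    div_le_div_of_nonneg_left (by positivity) hIpos hIle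
  have hkey := key_alg T k D a E hT hk hD hk2 ha0 ha2.le
  have hrw : k ^ 2 * Real.exp (-(2 * a)) / D = k ^ 2 / (Real.exp (2 * a) * D) := by
    rw [Real.exp_neg]; field_simp
  rw [hrw] at hkey
  linarith

/-- two-sided bounds for the toy-model rate function
`Ĩ_T(k) = (1/2) inf_{f ∈ H₀¹}[ k²/∫₀ᵀ e^{−t+2f(t)}dt + ∫₀ᵀ f'(t)²dt ]`:
for `T > 0` and `0 < k < sqrt((1 − e^{−T})/(2Te))`,
`k²(e−1)/(2e(1−e^{−T})) ≤ Ĩ_T(k) ≤ k²/(1−e^{−T})`. -/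
theorem toy_rate_two_sided_bound (T k : ℝ) (hT : 0 < T) (hk : 0 < k)
    (hk' : k < Real.sqrt ((1 - Real.exp (-T)) / (2 * T * Real.exp 1))) :
    k ^ 2 * (Real.exp 1 - 1) / (2 * Real.exp 1 * (1 - Real.exp (-T)))
        ≤ (1 / 2) * sInf {v : ℝ | ∃ f f' : ℝ → ℝ,
            f 0 = 0 ∧ (∀ t ∈ Set.Icc (0:ℝ) T, f t = ∫ s in (0:ℝ)..t, f' s) ∧
            IntervalIntegrable f' volume 0 T ∧
            IntervalIntegrable (fun s => (f' s) ^ 2) volume 0 T ∧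
            v = k ^ 2 / (∫ t in (0:ℝ)..T, Real.exp (-t + 2 * f t)) +
                  ∫ t in (0:ℝ)..T, (f' t) ^ 2} ∧
    (1 / 2) * sInf {v : ℝ | ∃ f f' : ℝ → ℝ,
            f 0 = 0 ∧ (∀ t ∈ Set.Icc (0:ℝ) T, f t = ∫ s in (0:ℝ)..t, f' s) ∧
            IntervalIntegrable f' volume 0 T ∧
            IntervalIntegrable (fun s => (f' s) ^ 2) volume 0 T ∧
            v = k ^ 2 / (∫ t in (0:ℝ)..T, Real.exp (-t + 2 * f t)) +
                  ∫ t in (0:ℝ)..T, (f' t) ^ 2}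
        ≤ k ^ 2 / (1 - Real.exp (-T)) := by
  have hD : 0 < 1 - Real.exp (-T) := by
    have : Real.exp (-T) < 1 := Real.exp_lt_one_iff.mpr (by linarith)
    linarith
  have hsq : 0 ≤ (1 - Real.exp (-T)) / (2 * T * Real.exp 1) := by positivity
  have hk2 : k ^ 2 < (1 - Real.exp (-T)) / (2 * T * Real.exp 1) :=
    (Real.lt_sqrt hk.le).mp hk'
  set S := {v : ℝ | ∃ f f' : ℝ → ℝ,
      f 0 = 0 ∧ (∀ t ∈ Set.Icc (0:ℝ) T, f t = ∫ s in (0:ℝ)..t, f' s) ∧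
      IntervalIntegrable f' volume 0 T ∧
      IntervalIntegrable (fun s => (f' s) ^ 2) volume 0 T ∧
      v = k ^ 2 / (∫ t in (0:ℝ)..T, Real.exp (-t + 2 * f t)) +
            ∫ t in (0:ℝ)..T, (f' t) ^ 2} with hS
  -- the zero function gives the element k^2/(1 - exp(-T))
  have hmem : k ^ 2 / (1 - Real.exp (-T)) ∈ S := by
    refine ⟨fun _ => 0, fun _ => 0, rfl, by simp, intervalIntegrable_const,
      by simpa using (intervalIntegrable_const : IntervalIntegrable (fun _ => (0:ℝ)) volume 0 T), ?_⟩
    have h1 : (fun t : ℝ => Real.exp (-t + 2 * 0)) = fun t : ℝ => Real.exp (-t) := by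
      funext t; norm_num
    simp only [h1]
    rw [exp_neg_integral]
    simp
  -- lower bound on every element
  have hlb : ∀ v ∈ S, k ^ 2 * (Real.exp 1 - 1) / (Real.exp 1 * (1 - Real.exp (-T))) ≤ v := by
    rintro v ⟨f, f', _, hrep, hint, hint2, rfl⟩
    exact elem_lower T k hT hk hk2 f f' hrep hint hint2
  have hlow : k ^ 2 * (Real.exp 1 - 1) / (Real.exp 1 * (1 - Real.exp (-T))) ≤ sInf S :=
    le_csInf ⟨_, hmem⟩ hlb
  have hup : sInf S ≤ k ^ 2 / (1 - Real.exp (-T)) := csInf_le ⟨_, hlb⟩ hmem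
  have he0 : (0:ℝ) < Real.exp 1 := Real.exp_pos 1
  have hm0 : 0 ≤ k ^ 2 * (Real.exp 1 - 1) / (Real.exp 1 * (1 - Real.exp (-T))) := by
    have h1e : (1:ℝ) ≤ Real.exp 1 := by nlinarith [Real.exp_one_gt_d9]
    exact div_nonneg (by nlinarith) (by positivity)
  constructor
  · have heq : k ^ 2 * (Real.exp 1 - 1) / (2 * Real.exp 1 * (1 - Real.exp (-T)))
        = (1 / 2) * (k ^ 2 * (Real.exp 1 - 1) / (Real.exp 1 * (1 - Real.exp (-T)))) := by
      rw [mul_assoc, div_mul_eq_div_div_swap]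
      ring
    rw [heq]
    linarith
  · have h0 : 0 ≤ sInf S := le_trans hm0 hlow
    linarith
end

section
/- For m = 1, the two rate functions agree: for every x ∈ ℝ, Ĩ_T(x) = Î_T(x), where Î_T(x) = inf{ Q̃_T(g) : g ∈ H₀¹, g(T) = x } with Q̃_T(g) = (1/2) inf{ ∫₀ᵀ l̇² + ∫₀ᵀ ḟ² : Φ(l,f)(t) = g(t) for all t ∈ [0,T] } (infimum over l, f ∈ H₀¹, equal to ∞ if no solution exists), and Ĩ_T(x) = (1/2) inf{ y² + ∫₀ᵀ ḟ(t)² dt : y ∈ ℝ, f ∈ H₀¹, Ψ(y,f) = x } (equal to ∞ if the equation is unsolvable). -/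
open MeasureTheory
open scoped ENNReal

/-- Membership in the Cameron–Martin space `H₀¹[0,T]`: `f(0) = 0`, `f` is the integral
of `f'` on `[0,T]`, and `f'` is square-integrable. -/
def IsCM (T : ℝ) (f f' : ℝ → ℝ) : Prop :=
  f 0 = 0 ∧ (∀ t ∈ Set.Icc (0:ℝ) T, f t = ∫ s in (0:ℝ)..t, f' s) ∧
  IntervalIntegrable f' volume 0 T ∧
  IntervalIntegrable (fun s => (f' s) ^ 2) volume 0 T

/-- The path functional `Φ(l,f)(t)` of the one-dimensional (`m = 1`) model. -/
noncomputable def Phi (d : ℕ) (b σ : ℝ → (Fin d → ℝ) → ℝ) (ρ : ℝ)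
    (hat : (ℝ → ℝ) → ℝ → Fin d → ℝ) (l' f f' : ℝ → ℝ) (t : ℝ) : ℝ :=
  (∫ s in (0:ℝ)..t, b s (hat f s)) +
    Real.sqrt (1 - ρ ^ 2) * (∫ s in (0:ℝ)..t, σ s (hat f s) * l' s) +
    ρ * ∫ s in (0:ℝ)..t, σ s (hat f s) * f' s

/-- The sample-path rate function `Q̃_T(g)`, with value `∞` when `Φ(l,f) = g` has no
solution `l, f ∈ H₀¹`. -/
noncomputable def QT (T : ℝ) (d : ℕ) (b σ : ℝ → (Fin d → ℝ) → ℝ) (ρ : ℝ)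
    (hat : (ℝ → ℝ) → ℝ → Fin d → ℝ) (g : ℝ → ℝ) : ℝ≥0∞ :=
  sInf {v : ℝ≥0∞ | ∃ l l' f f' : ℝ → ℝ, IsCM T l l' ∧ IsCM T f f' ∧
    (∀ t ∈ Set.Icc (0:ℝ) T, Phi d b σ ρ hat l' f f' t = g t) ∧
    v = ENNReal.ofReal ((1 / 2) *
      ((∫ t in (0:ℝ)..T, (l' t) ^ 2) + ∫ t in (0:ℝ)..T, (f' t) ^ 2))}

/-- The functional `Ψ(y,f)` of the one-dimensional model. -/
noncomputable def Psi (T : ℝ) (d : ℕ) (b σ : ℝ → (Fin d → ℝ) → ℝ) (ρ : ℝ)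
    (hat : (ℝ → ℝ) → ℝ → Fin d → ℝ) (y : ℝ) (f f' : ℝ → ℝ) : ℝ :=
  (∫ s in (0:ℝ)..T, b s (hat f s)) +
    ρ * (∫ s in (0:ℝ)..T, σ s (hat f s) * f' s) +
    Real.sqrt (1 - ρ ^ 2) * Real.sqrt (∫ s in (0:ℝ)..T, (σ s (hat f s)) ^ 2) * y

/-- Cauchy–Schwarz inequality for interval integrals, via the discriminant trick. -/
private lemma cs_aux {T : ℝ} (hT : 0 ≤ T) {u v : ℝ → ℝ}
    (hu2 : IntervalIntegrable (fun s => u s ^ 2) volume 0 T)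
    (hv2 : IntervalIntegrable (fun s => v s ^ 2) volume 0 T)
    (huv : IntervalIntegrable (fun s => u s * v s) volume 0 T) :
    (∫ s in (0:ℝ)..T, u s * v s) ^ 2 ≤
      (∫ s in (0:ℝ)..T, u s ^ 2) * (∫ s in (0:ℝ)..T, v s ^ 2) := by
  set A := ∫ s in (0:ℝ)..T, u s ^ 2 with hA
  set B := ∫ s in (0:ℝ)..T, u s * v s with hB
  set C := ∫ s in (0:ℝ)..T, v s ^ 2 with hC
  have hA0 : 0 ≤ A := intervalIntegral.integral_nonneg hT fun s _ => sq_nonneg _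
  have hC0 : 0 ≤ C := intervalIntegral.integral_nonneg hT fun s _ => sq_nonneg _
  have key : ∀ c : ℝ, 0 ≤ A * c ^ 2 + 2 * B * c + C := by
    intro c
    have h0 : 0 ≤ ∫ s in (0:ℝ)..T, (c * u s + v s) ^ 2 :=
      intervalIntegral.integral_nonneg hT fun s _ => sq_nonneg _
    have heq : (∫ s in (0:ℝ)..T, (c * u s + v s) ^ 2)
        = A * c ^ 2 + 2 * B * c + C := by
      have hfun : (fun s => (c * u s + v s) ^ 2)
          = fun s => c ^ 2 * (u s ^ 2) + (2 * c * (u s * v s) + v s ^ 2) :=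
        funext fun s => by ring
      rw [hfun, intervalIntegral.integral_add (hu2.const_mul _)
        ((huv.const_mul _).add hv2),
        intervalIntegral.integral_add (huv.const_mul _) hv2,
        intervalIntegral.integral_const_mul, intervalIntegral.integral_const_mul]
      ring
    linarith [heq ▸ h0]
  rcases hA0.lt_or_eq with hApos | hAzero
  · have h := key (-B / A)
    have h2 : A * (A * (-B / A) ^ 2 + 2 * B * (-B / A) + C) = A * C - B ^ 2 := by
      field_simp
      ring
    nlinarith [mul_nonneg hA0 h]
  · have hBzero : B = 0 := by
      by_contra hB0
      have h := key (-(C + 1) / (2 * B))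
      rw [← hAzero] at h
      have h3 : 2 * B * (-(C + 1) / (2 * B)) = -(C + 1) := by field_simp
      nlinarith
    rw [hBzero, ← hAzero]
    nlinarith

/-- for `m = 1` the two representations of the small-noise rate function
agree: `Ĩ_T(x) = Î_T(x)` for every `x ∈ ℝ`, where
`Î_T(x) = inf { Q̃_T(g) : g ∈ H₀¹, g(T) = x }` and
`Ĩ_T(x) = (1/2) inf { y² + ∫₀ᵀ f'² : Ψ(y,f) = x }` (both `∞` if unsolvable). -/
theorem rate_functions_agree_one_dim (T : ℝ) (hT : 0 < T) (d : ℕ)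
    (b σ : ℝ → (Fin d → ℝ) → ℝ)
    (hb : ContinuousOn (fun p : ℝ × (Fin d → ℝ) => b p.1 p.2)
      (Set.Icc (0:ℝ) T ×ˢ Set.univ))
    (hσ : ContinuousOn (fun p : ℝ × (Fin d → ℝ) => σ p.1 p.2)
      (Set.Icc (0:ℝ) T ×ˢ Set.univ))
    (ρ : ℝ) (hρ : ρ ∈ Set.Ioo (-1 : ℝ) 1)
    (hat : (ℝ → ℝ) → ℝ → Fin d → ℝ)
    (hhat : ∀ f : ℝ → ℝ, ContinuousOn (hat f) (Set.Icc (0:ℝ) T))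
    (x : ℝ) :
    sInf {v : ℝ≥0∞ | ∃ y : ℝ, ∃ f f' : ℝ → ℝ, IsCM T f f' ∧
        Psi T d b σ ρ hat y f f' = x ∧
        v = ENNReal.ofReal ((1 / 2) * (y ^ 2 + ∫ t in (0:ℝ)..T, (f' t) ^ 2))}
      = sInf {v : ℝ≥0∞ | ∃ g g' : ℝ → ℝ, IsCM T g g' ∧ g T = x ∧
        v = QT T d b σ ρ hat g} := by
  obtain ⟨hρ1, hρ2⟩ := hρ
  have hTle : (0:ℝ) ≤ T := hT.le
  have huicc : Set.uIcc (0:ℝ) T = Set.Icc 0 T := Set.uIcc_of_le hTle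
  have hcomp : ∀ f : ℝ → ℝ,
      ContinuousOn (fun s => b s (hat f s)) (Set.uIcc (0:ℝ) T) ∧
      ContinuousOn (fun s => σ s (hat f s)) (Set.uIcc (0:ℝ) T) := by
    intro f
    rw [huicc]
    have hmap : Set.MapsTo (fun s => (s, hat f s)) (Set.Icc (0:ℝ) T)
        (Set.Icc (0:ℝ) T ×ˢ Set.univ) := fun s hs => ⟨hs, trivial⟩
    have hc : ContinuousOn (fun s => (s, hat f s)) (Set.Icc (0:ℝ) T) :=
      (continuous_id.continuousOn).prodMk (hhat f)
    exact ⟨hb.comp hc hmap, hσ.comp hc hmap⟩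
  have hsub : ∀ t ∈ Set.Icc (0:ℝ) T, Set.uIcc (0:ℝ) t ⊆ Set.uIcc (0:ℝ) T := by
    intro t ht
    apply Set.uIcc_subset_uIcc Set.left_mem_uIcc
    rw [huicc]; exact ht
  apply le_antisymm
  · -- `sInf LHS ≤ sInf RHS`
    refine le_sInf ?_
    rintro w ⟨g, g', hg, hgT, rfl⟩
    unfold QT
    refine le_sInf ?_
    rintro v ⟨l, l', f, f', hl, hf, hΦ, rfl⟩
    obtain ⟨hbfc, hσfc⟩ := hcomp f
    have hσf2 : IntervalIntegrable (fun s => (σ s (hat f s)) ^ 2) volume 0 T :=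
      (hσfc.pow 2).intervalIntegrable
    have hσl' : IntervalIntegrable (fun s => σ s (hat f s) * l' s) volume 0 T :=
      hl.2.2.1.continuousOn_mul hσfc
    have hcs := cs_aux hTle hσf2 hl.2.2.2 hσl'
    set S := ∫ s in (0:ℝ)..T, (σ s (hat f s)) ^ 2 with hSdef
    set B := ∫ s in (0:ℝ)..T, σ s (hat f s) * l' s with hBdef
    have hS0 : 0 ≤ S :=
      intervalIntegral.integral_nonneg hTle fun s _ => sq_nonneg _
    have hl'sq0 : 0 ≤ ∫ t in (0:ℝ)..T, (l' t) ^ 2 :=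
      intervalIntegral.integral_nonneg hTle fun s _ => sq_nonneg _
    have hx : (∫ s in (0:ℝ)..T, b s (hat f s)) + Real.sqrt (1 - ρ ^ 2) * B
        + ρ * (∫ s in (0:ℝ)..T, σ s (hat f s) * f' s) = x := by
      have h := hΦ T ⟨hTle, le_refl T⟩
      rw [hgT] at h
      simp only [Phi] at h
      linarith [h]
    rcases hS0.lt_or_eq with hSpos | hSzero
    · -- `S > 0`
      have hsS : (0:ℝ) < Real.sqrt S := Real.sqrt_pos.mpr hSpos
      have hsqy : Real.sqrt S * (B / Real.sqrt S) = B := by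
        field_simp
      have hy2 : (B / Real.sqrt S) ^ 2 ≤ ∫ t in (0:ℝ)..T, (l' t) ^ 2 := by
        rw [div_pow, Real.sq_sqrt hS0, div_le_iff₀ hSpos]
        linarith [hcs]
      have hΨeq : Psi T d b σ ρ hat (B / Real.sqrt S) f f' = x := by
        simp only [Psi]
        rw [← hSdef, mul_assoc, hsqy]
        linarith [hx]
      have hmem : ENNReal.ofReal ((1 / 2) *
          ((B / Real.sqrt S) ^ 2 + ∫ t in (0:ℝ)..T, (f' t) ^ 2)) ∈
          {v : ℝ≥0∞ | ∃ y : ℝ, ∃ f f' : ℝ → ℝ, IsCM T f f' ∧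
            Psi T d b σ ρ hat y f f' = x ∧
            v = ENNReal.ofReal ((1 / 2) * (y ^ 2 + ∫ t in (0:ℝ)..T, (f' t) ^ 2))} :=
        ⟨B / Real.sqrt S, f, f', hf, hΨeq, rfl⟩
      exact le_trans (sInf_le hmem) (ENNReal.ofReal_le_ofReal (by linarith))
    · -- `S = 0`
      have hSz : S = 0 := hSzero.symm
      have hB0 : B = 0 := by nlinarith [hcs, sq_nonneg B]
      have hΨeq : Psi T d b σ ρ hat 0 f f' = x := by
        simp only [Psi]
        rw [← hSdef]
        have h1 : Real.sqrt (1 - ρ ^ 2) * B = 0 := by rw [hB0]; ring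
        have h2 : Real.sqrt (1 - ρ ^ 2) * Real.sqrt S * 0 = 0 := by ring
        linarith [hx]
      have hmem : ENNReal.ofReal ((1 / 2) *
          ((0:ℝ) ^ 2 + ∫ t in (0:ℝ)..T, (f' t) ^ 2)) ∈
          {v : ℝ≥0∞ | ∃ y : ℝ, ∃ f f' : ℝ → ℝ, IsCM T f f' ∧
            Psi T d b σ ρ hat y f f' = x ∧
            v = ENNReal.ofReal ((1 / 2) * (y ^ 2 + ∫ t in (0:ℝ)..T, (f' t) ^ 2))} :=
        ⟨0, f, f', hf, hΨeq, rfl⟩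
      refine le_trans (sInf_le hmem) (ENNReal.ofReal_le_ofReal ?_)
      nlinarith [hl'sq0]
  · -- `sInf RHS ≤ sInf LHS`
    refine le_sInf ?_
    rintro v ⟨y, f, f', hf, hΨ, rfl⟩
    obtain ⟨hbfc, hσfc⟩ := hcomp f
    set S := ∫ s in (0:ℝ)..T, (σ s (hat f s)) ^ 2 with hSdef
    have hS0 : 0 ≤ S :=
      intervalIntegral.integral_nonneg hTle fun s _ => sq_nonneg _
    set k := y / Real.sqrt S with hkdef
    set l' : ℝ → ℝ := fun s => σ s (hat f s) * k with hl'def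
    have hl'c : ContinuousOn l' (Set.uIcc (0:ℝ) T) := hσfc.mul continuousOn_const
    have hl'int : IntervalIntegrable l' volume 0 T := hl'c.intervalIntegrable
    have hlCM : IsCM T (fun t => ∫ s in (0:ℝ)..t, l' s) l' :=
      ⟨by simp, fun t _ => rfl, hl'int, (hl'c.pow 2).intervalIntegrable⟩
    have hintl' : (∫ s in (0:ℝ)..T, σ s (hat f s) * l' s) = k * S := by
      have hfun : (fun s => σ s (hat f s) * l' s)
          = fun s => k * (σ s (hat f s)) ^ 2 := funext fun s => by
        rw [hl'def]; ring
      rw [hfun, intervalIntegral.integral_const_mul, ← hSdef]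
    have hl'sq : (∫ t in (0:ℝ)..T, (l' t) ^ 2) = k ^ 2 * S := by
      have hfun : (fun s => (l' s) ^ 2)
          = fun s => k ^ 2 * (σ s (hat f s)) ^ 2 := funext fun s => by
        rw [hl'def]; ring
      rw [hfun, intervalIntegral.integral_const_mul, ← hSdef]
    have hkS : k * S = Real.sqrt S * y := by
      rcases hS0.lt_or_eq with hSpos | hSz
      · have hs : Real.sqrt S ≠ 0 := ne_of_gt (Real.sqrt_pos.mpr hSpos)
        have hss : Real.sqrt S * Real.sqrt S = S := Real.mul_self_sqrt hS0
        rw [hkdef]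
        field_simp
        linear_combination (-y) * Real.sq_sqrt hS0
      · rw [← hSz]
        simp
    have hk2S : k ^ 2 * S ≤ y ^ 2 := by
      rcases hS0.lt_or_eq with hSpos | hSz
      · rw [hkdef, div_pow, Real.sq_sqrt hS0,
          div_mul_cancel₀ _ (ne_of_gt hSpos)]
      · rw [← hSz]
        nlinarith [sq_nonneg y]
    set g' : ℝ → ℝ := fun s => b s (hat f s)
        + Real.sqrt (1 - ρ ^ 2) * (σ s (hat f s) * l' s)
        + ρ * (σ s (hat f s) * f' s) with hg'def
    have h1 : IntervalIntegrable (fun s => b s (hat f s)) volume 0 T :=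
      hbfc.intervalIntegrable
    have h2 : IntervalIntegrable (fun s => σ s (hat f s) * l' s) volume 0 T :=
      (hσfc.mul hl'c).intervalIntegrable
    have h3 : IntervalIntegrable (fun s => σ s (hat f s) * f' s) volume 0 T :=
      hf.2.2.1.continuousOn_mul hσfc
    have hPhiEq : ∀ t ∈ Set.Icc (0:ℝ) T,
        Phi d b σ ρ hat l' f f' t = ∫ s in (0:ℝ)..t, g' s := by
      intro t ht
      have h1' := h1.mono_set (hsub t ht)
      have h2' := h2.mono_set (hsub t ht)
      have h3' := h3.mono_set (hsub t ht)
      simp only [Phi, hg'def]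
      rw [intervalIntegral.integral_add (h1'.add (h2'.const_mul _))
          (h3'.const_mul _),
        intervalIntegral.integral_add h1' (h2'.const_mul _),
        intervalIntegral.integral_const_mul, intervalIntegral.integral_const_mul]
    have hAc : ContinuousOn (fun s => b s (hat f s)
        + Real.sqrt (1 - ρ ^ 2) * (σ s (hat f s) * l' s)) (Set.uIcc (0:ℝ) T) :=
      hbfc.add (continuousOn_const.mul (hσfc.mul hl'c))
    have hg'sq : IntervalIntegrable (fun s => (g' s) ^ 2) volume 0 T := by
      have e1 : IntervalIntegrable (fun s => (b s (hat f s)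
          + Real.sqrt (1 - ρ ^ 2) * (σ s (hat f s) * l' s)) ^ 2) volume 0 T :=
        (hAc.pow 2).intervalIntegrable
      have e2 : IntervalIntegrable (fun s => ((2 * ρ) * ((b s (hat f s)
          + Real.sqrt (1 - ρ ^ 2) * (σ s (hat f s) * l' s)) * σ s (hat f s)))
          * f' s) volume 0 T :=
        hf.2.2.1.continuousOn_mul
          (continuousOn_const.mul (hAc.mul hσfc))
      have e3 : IntervalIntegrable (fun s => (ρ ^ 2 * (σ s (hat f s)) ^ 2)
          * (f' s) ^ 2) volume 0 T :=
        hf.2.2.2.continuousOn_mul (continuousOn_const.mul (hσfc.pow 2))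
      have hfun : (fun s => (g' s) ^ 2) = fun s => (b s (hat f s)
          + Real.sqrt (1 - ρ ^ 2) * (σ s (hat f s) * l' s)) ^ 2
          + (((2 * ρ) * ((b s (hat f s)
          + Real.sqrt (1 - ρ ^ 2) * (σ s (hat f s) * l' s)) * σ s (hat f s)))
          * f' s
          + (ρ ^ 2 * (σ s (hat f s)) ^ 2) * (f' s) ^ 2) :=
        funext fun s => by rw [hg'def]; ring
      rw [hfun]
      exact e1.add (e2.add e3)
    have hgCM : IsCM T (Phi d b σ ρ hat l' f f') g' := by
      refine ⟨?_, hPhiEq, ?_, hg'sq⟩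
      · simp [Phi]
      · exact (h1.add (h2.const_mul _)).add (h3.const_mul _)
    have hgT : Phi d b σ ρ hat l' f f' T = x := by
      simp only [Phi]
      rw [hintl', hkS]
      simp only [Psi] at hΨ
      rw [← hSdef] at hΨ
      linarith [hΨ]
    refine le_trans (sInf_le ⟨Phi d b σ ρ hat l' f f', g', hgCM, hgT, rfl⟩) ?_
    unfold QT
    refine le_trans (sInf_le ⟨fun t => ∫ s in (0:ℝ)..t, l' s, l', f, f',
      hlCM, hf, fun t _ => rfl, rfl⟩) (ENNReal.ofReal_le_ofReal ?_)
    rw [hl'sq]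
    linarith [hk2S]
end
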